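/- Let (X,Z,Y) be square-integrable random variables/vectors with Y real, Z ∈ ℝ^q, X ∈ ℝ^p. Among all functions of the form m₀(X,Z) = μ + Zᵀβ + g(X) with E[g(X)] = 0, the minimizer of E[(Y − m₀(X,Z))²] satisfies g(X) = E[Y − μ − Zᵀβ | X], μ = E[Y] − E[Z]ᵀβ, and β = (E[(Z − E[Z|X])(Z − E[Z|X])ᵀ])⁻¹ E[(Z − E[Z|X])(Y − E[Y|X])], provided the indicated matrix is invertible. -/

import Mathlib

open MeasureTheory Matrix

lemma quad_zero {c d : ℝ} (hd : 0 ≤ d) (h : ∀ t : ℝ, 0 ≤ t^2 * d - 2*t*c) : c = 0 := by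
  have hd1 : (0:ℝ) < d + 1 := by linarith
  have h1 := h (c/(d+1))
  have e : (c/(d+1))^2*d - 2*(c/(d+1))*c = (c^2*d - 2*c^2*(d+1))/(d+1)^2 := by
    field_simp
  rw [e] at h1
  have h2 : 0 ≤ c^2*d - 2*c^2*(d+1) := by
    have h3 : (c^2*d - 2*c^2*(d+1)) = (c^2*d - 2*c^2*(d+1))/(d+1)^2 * (d+1)^2 := by
      field_simp
    rw [h3]; exact mul_nonneg h1 (by positivity)
  have h4 : c^2 = 0 := le_antisymm (by nlinarith [sq_nonneg c]) (sq_nonneg c)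
  exact pow_eq_zero_iff two_ne_zero |>.mp h4

lemma int_mul {α} [MeasurableSpace α] {μ : Measure α} {f g : α → ℝ}
    (hf : MemLp f 2 μ) (hg : MemLp g 2 μ) : Integrable (fun x => f x * g x) μ := by
  have hb : Integrable (fun x => (f x)^2 + (g x)^2) μ :=
    hf.integrable_sq.add hg.integrable_sq
  refine hb.mono' (hf.aestronglyMeasurable.mul hg.aestronglyMeasurable) ?_
  filter_upwards with x
  rw [Real.norm_eq_abs, abs_mul]
  nlinarith [sq_nonneg (|f x| - |g x|), sq_abs (f x), sq_abs (g x),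
    abs_nonneg (f x), abs_nonneg (g x)]

set_option maxHeartbeats 1000000 in
lemma memℒp_two_condexp {α} {m : MeasurableSpace α} [m0 : MeasurableSpace α] (hm : m ≤ m0)
    (μ : Measure α) [IsFiniteMeasure μ] {f : α → ℝ} (hf : MemLp f 2 μ) :
    MemLp (μ[f|m]) 2 μ := by
  set fL := hf.toLp f with hfL
  have key : (↑↑(condExpL2 ℝ ℝ hm fL) : α → ℝ) =ᵐ[μ] μ[f|m] := by
    refine ae_eq_condExp_of_forall_setIntegral_eq hm (hf.integrable one_le_two) ?_ ?_ ?_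
    · intro s _ hμs
      exact integrableOn_condExpL2_of_measure_ne_top hm hμs.ne fL
    · intro s hs hμs
      rw [integral_condExpL2_eq hm fL hs hμs.ne]
      exact setIntegral_congr_ae (hm s hs) ((hf.coeFn_toLp).mono fun x hx _ => hx)
    · exact aestronglyMeasurable_condExpL2 hm fL
  exact (Lp.memLp _).ae_eq key

lemma orth {Ω} [MeasurableSpace Ω] {P : Measure Ω} [IsProbabilityMeasure P]
    {A D : Ω → ℝ} (hA : MemLp A 2 P) (hD : MemLp D 2 P)
    (h : ∀ t : ℝ, ∫ ω, (A ω)^2 ∂P ≤ ∫ ω, (A ω - t * D ω)^2 ∂P) :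
    ∫ ω, A ω * D ω ∂P = 0 := by
  have hAD : Integrable (fun ω => A ω * D ω) P := int_mul hA hD
  have hDD : Integrable (fun ω => D ω * D ω) P := int_mul hD hD
  have hAA : Integrable (fun ω => A ω * A ω) P := int_mul hA hA
  have hexp : ∀ t : ℝ, ∫ ω, (A ω - t*D ω)^2 ∂P
      = ∫ ω, A ω * A ω ∂P - 2*t*(∫ ω, A ω * D ω ∂P) + t^2 * ∫ ω, D ω * D ω ∂P := by
    intro t
    have e : (fun ω => (A ω - t*D ω)^2)
        = fun ω => (A ω * A ω - (2*t)*(A ω * D ω)) + t^2*(D ω * D ω) := by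
      funext ω; ring
    have i1 : Integrable (fun ω => A ω * A ω - 2*t*(A ω * D ω)) P :=
      hAA.sub (hAD.const_mul (2*t))
    have i2 : Integrable (fun ω => 2*t*(A ω * D ω)) P := hAD.const_mul (2*t)
    have i3 : Integrable (fun ω => t^2*(D ω * D ω)) P := hDD.const_mul (t^2)
    rw [e, integral_add i1 i3, integral_sub hAA i2, integral_const_mul, integral_const_mul]
  have hsq : ∫ ω, (A ω)^2 ∂P = ∫ ω, A ω * A ω ∂P := by
    congr 1; funext ω; ring
  refine quad_zero (c := ∫ ω, A ω * D ω ∂P) (d := ∫ ω, D ω * D ω ∂P)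
    (integral_nonneg fun ω => mul_self_nonneg (D ω)) fun t => ?_
  have h1 := h t
  rw [hexp t, hsq] at h1
  linarith

set_option maxHeartbeats 1000000 in
/-- characterization of the minimizer of the semiparametric
least-squares criterion `E[(Y - μ - Zᵀβ - g(X))²]` over the class of
partially linear functions with `E[g(X)] = 0`. -/
theorem stmt0
    {Ω : Type*} [MeasurableSpace Ω] (P : Measure Ω) [IsProbabilityMeasure P]
    {p q : ℕ}
    (X : Ω → (Fin p → ℝ)) (Z : Ω → (Fin q → ℝ)) (Y : Ω → ℝ)
    (hX : Measurable X) (hZ : Measurable Z) (hY : Measurable Y)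
    (hY2 : MemLp Y 2 P) (hZ2 : ∀ s, MemLp (fun ω => Z ω s) 2 P)
    (μ₀ : ℝ) (β : Fin q → ℝ) (g : (Fin p → ℝ) → ℝ)
    (hg : Measurable g) (hg2 : MemLp (fun ω => g (X ω)) 2 P)
    (hgmean : ∫ ω, g (X ω) ∂P = 0)
    -- (μ₀, β, g) minimizes the least-squares criterion over the class
    (hmin : ∀ (μ' : ℝ) (β' : Fin q → ℝ) (g' : (Fin p → ℝ) → ℝ),
      Measurable g' → MemLp (fun ω => g' (X ω)) 2 P →
      (∫ ω, g' (X ω) ∂P = 0) →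
      ∫ ω, (Y ω - (μ₀ + (∑ s, Z ω s * β s) + g (X ω)))^2 ∂P ≤
        ∫ ω, (Y ω - (μ' + (∑ s, Z ω s * β' s) + g' (X ω)))^2 ∂P)
    (B : Matrix (Fin q) (Fin q) ℝ)
    (hB : ∀ s t, B s t =
      ∫ ω, (Z ω s - (P[(fun ω => Z ω s) | MeasurableSpace.comap X inferInstance]) ω)
        * (Z ω t - (P[(fun ω => Z ω t) | MeasurableSpace.comap X inferInstance]) ω) ∂P)
    (hBinv : IsUnit B) :
    ((fun ω => g (X ω)) =ᵐ[P]
        P[(fun ω => Y ω - μ₀ - ∑ s, Z ω s * β s) | MeasurableSpace.comap X inferInstance])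
    ∧ μ₀ = (∫ ω, Y ω ∂P) - ∑ s, (∫ ω, Z ω s ∂P) * β s
    ∧ β = B⁻¹ *ᵥ (fun s =>
        ∫ ω, (Z ω s - (P[(fun ω => Z ω s) | MeasurableSpace.comap X inferInstance]) ω)
          * (Y ω - (P[Y | MeasurableSpace.comap X inferInstance]) ω) ∂P) := by
  classical
  have one_le : (1:ENNReal) ≤ 2 := one_le_two
  have hm : MeasurableSpace.comap X (inferInstance : MeasurableSpace (Fin p → ℝ))
      ≤ ‹MeasurableSpace Ω› := hX.comap_le
  set A : Ω → ℝ := fun ω => Y ω - (μ₀ + (∑ s, Z ω s * β s) + g (X ω)) with hA_def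
  -- Memℒp facts
  have hS2 : MemLp (fun ω => ∑ s, Z ω s * β s) 2 P := by
    have h2 := memLp_finset_sum' (μ := P) (p := 2) Finset.univ
      (f := fun (s : Fin q) (ω : Ω) => Z ω s * β s)
      (fun s _ => by simpa [mul_comm] using (hZ2 s).const_mul (β s))
    convert h2 using 1
    funext ω
    simp [Finset.sum_apply]
  have hA2 : MemLp A 2 P := by
    rw [hA_def]
    exact hY2.sub (((memLp_const μ₀).add hS2).add hg2)
  have hA1 : Integrable A P := hA2.integrable one_le
  have hY1 : Integrable Y P := hY2.integrable one_le
  have hZ1 : ∀ s, Integrable (fun ω => Z ω s) P := fun s => (hZ2 s).integrable one_le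
  have hg1 : Integrable (fun ω => g (X ω)) P := hg2.integrable one_le
  have hS1 : Integrable (fun ω => ∑ s, Z ω s * β s) P := hS2.integrable one_le
  -- orthogonality to constants
  have horthconst : ∫ ω, A ω * (1:ℝ) ∂P = 0 := by
    apply orth hA2 (memLp_const 1)
    intro t
    have h := hmin (μ₀ + t) β g hg hg2 hgmean
    have e1 : ∫ ω, (Y ω - (μ₀ + (∑ s, Z ω s * β s) + g (X ω)))^2 ∂P
        = ∫ ω, (A ω)^2 ∂P := by
      apply integral_congr_ae; filter_upwards with ω; simp [hA_def]
    have e2 : ∫ ω, (Y ω - ((μ₀ + t) + (∑ s, Z ω s * β s) + g (X ω)))^2 ∂P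
        = ∫ ω, (A ω - t * 1)^2 ∂P := by
      apply integral_congr_ae; filter_upwards with ω; simp only [hA_def]; ring
    rw [e1, e2] at h
    exact h
  have hintA : ∫ ω, A ω ∂P = 0 := by simpa using horthconst
  -- orthogonality to the Z's
  have horthZ : ∀ j, ∫ ω, A ω * Z ω j ∂P = 0 := by
    intro j
    apply orth hA2 (hZ2 j)
    intro t
    have h := hmin μ₀ (fun s => β s + t * (if s = j then 1 else 0)) g hg hg2 hgmean
    have hsum : ∀ ω, ∑ s, Z ω s * (β s + t * (if s = j then 1 else 0))
        = (∑ s, Z ω s * β s) + t * Z ω j := by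
      intro ω
      have e : ∀ s : Fin q, Z ω s * (β s + t * (if s = j then 1 else 0))
          = Z ω s * β s + (if s = j then t * Z ω s else 0) := by
        intro s; split_ifs <;> ring
      simp only [e, Finset.sum_add_distrib]
      rw [Finset.sum_ite_eq' Finset.univ j (fun s => t * Z ω s)]
      simp
    have e1 : ∫ ω, (Y ω - (μ₀ + (∑ s, Z ω s * β s) + g (X ω)))^2 ∂P
        = ∫ ω, (A ω)^2 ∂P := by
      apply integral_congr_ae; filter_upwards with ω; simp [hA_def]
    have e2 : ∫ ω, (Y ω - (μ₀ + (∑ s, Z ω s * (β s + t * (if s = j then 1 else 0))) + g (X ω)))^2 ∂P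
        = ∫ ω, (A ω - t * Z ω j)^2 ∂P := by
      apply integral_congr_ae; filter_upwards with ω
      rw [hsum ω]; simp only [hA_def]; ring
    rw [e1, e2] at h
    exact h
  -- orthogonality to mean-zero functions of X
  have horthg : ∀ (φ : (Fin p → ℝ) → ℝ), Measurable φ → MemLp (fun ω => φ (X ω)) 2 P →
      (∫ ω, φ (X ω) ∂P = 0) → ∫ ω, A ω * φ (X ω) ∂P = 0 := by
    intro φ hφ hφ2 hφ0
    apply orth hA2 hφ2
    intro t
    have hmean : ∫ ω, (g (X ω) + t * φ (X ω)) ∂P = 0 := by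
      rw [integral_add hg1 ((hφ2.integrable one_le).const_mul t), integral_const_mul,
        hgmean, hφ0]
      ring
    have h := hmin μ₀ β (fun x => g x + t * φ x) (hg.add (hφ.const_mul t))
      (hg2.add (hφ2.const_mul t)) hmean
    have e1 : ∫ ω, (Y ω - (μ₀ + (∑ s, Z ω s * β s) + g (X ω)))^2 ∂P
        = ∫ ω, (A ω)^2 ∂P := by
      apply integral_congr_ae; filter_upwards with ω; simp [hA_def]
    have e2 : ∫ ω, (Y ω - (μ₀ + (∑ s, Z ω s * β s) + (g (X ω) + t * φ (X ω))))^2 ∂P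
        = ∫ ω, (A ω - t * φ (X ω))^2 ∂P := by
      apply integral_congr_ae; filter_upwards with ω; simp only [hA_def]; ring
    rw [e1, e2] at h
    exact h
  -- set integrals of A over comap-measurable sets vanish
  have hsetint : ∀ s : Set Ω,
      MeasurableSet[MeasurableSpace.comap X inferInstance] s → ∫ ω in s, A ω ∂P = 0 := by
    intro s hs
    obtain ⟨u, hu, rfl⟩ := hs
    set c : ℝ := (P (X ⁻¹' u)).toReal with hc_def
    have hφmeas : Measurable (fun x => Set.indicator u (fun _ => (1:ℝ)) x - c) :=
      (measurable_const.indicator hu).sub measurable_const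
    have hindeq : (fun ω => Set.indicator u (fun _ => (1:ℝ)) (X ω))
        = Set.indicator (X ⁻¹' u) (fun _ => (1:ℝ)) := by
      funext ω
      by_cases h : X ω ∈ u <;> simp [Set.indicator_apply, Set.mem_preimage, h]
    have hind2 : MemLp (fun ω => Set.indicator u (fun _ => (1:ℝ)) (X ω)) 2 P := by
      rw [hindeq]; exact (memLp_const 1).indicator (hX hu)
    have hφ2 : MemLp (fun ω => Set.indicator u (fun _ => (1:ℝ)) (X ω) - c) 2 P :=
      hind2.sub (memLp_const c)
    have hmean : ∫ ω, (Set.indicator u (fun _ => (1:ℝ)) (X ω) - c) ∂P = 0 := by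
      rw [integral_sub (hind2.integrable one_le) (integrable_const c), integral_const]
      rw [hindeq, integral_indicator_const (1:ℝ) (hX hu)]
      simp [hc_def, Measure.real]
    have h0 := horthg (fun x => Set.indicator u (fun _ => (1:ℝ)) x - c) hφmeas hφ2 hmean
    have hsplit : ∫ ω, A ω * (Set.indicator u (fun _ => (1:ℝ)) (X ω) - c) ∂P
        = ∫ ω in X ⁻¹' u, A ω ∂P - c * ∫ ω, A ω ∂P := by
      have e : (fun ω => A ω * (Set.indicator u (fun _ => (1:ℝ)) (X ω) - c))
          = fun ω => (X ⁻¹' u).indicator A ω - c * A ω := by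
        funext ω
        by_cases h : X ω ∈ u <;>
          simp [Set.indicator_apply, Set.mem_preimage, h] <;> ring
      rw [e, integral_sub (hA1.indicator (hX hu)) (hA1.const_mul c),
        integral_indicator (hX hu), integral_const_mul]
    rw [hsplit, hintA] at h0
    simpa using h0
  -- conditional expectation of A is zero
  have hAcond : P[A | MeasurableSpace.comap X inferInstance] =ᵐ[P] 0 := by
    have h := ae_eq_condExp_of_forall_setIntegral_eq (μ := P)
      (f := A) (g := (0 : Ω → ℝ)) hm hA1
      (fun s _ _ => integrableOn_zero)
      (fun s hs _ => by rw [hsetint s hs]; simp)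
      (StronglyMeasurable.aestronglyMeasurable
        (stronglyMeasurable_const :
          StronglyMeasurable[MeasurableSpace.comap X inferInstance] (fun _ : Ω => (0:ℝ))))
    exact h.symm
  -- Part 1
  have hXm : Measurable[MeasurableSpace.comap X inferInstance] X :=
    Measurable.of_comap_le le_rfl
  have hgXsm : StronglyMeasurable[MeasurableSpace.comap X inferInstance]
      (fun ω => g (X ω)) := (hg.comp hXm).stronglyMeasurable
  have hW1 : Integrable (fun ω => Y ω - μ₀ - ∑ s, Z ω s * β s) P :=
    (hY1.sub (integrable_const μ₀)).sub hS1
  have hAW : A = (fun ω => Y ω - μ₀ - ∑ s, Z ω s * β s) - (fun ω => g (X ω)) := by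
    funext ω; simp only [hA_def, Pi.sub_apply]; ring
  have hcondsub : P[A | MeasurableSpace.comap X inferInstance] =ᵐ[P]
      P[(fun ω => Y ω - μ₀ - ∑ s, Z ω s * β s) | MeasurableSpace.comap X inferInstance]
        - P[(fun ω => g (X ω)) | MeasurableSpace.comap X inferInstance] := by
    rw [hAW]; exact condExp_sub hW1 hg1 _
  have hcondg : P[(fun ω => g (X ω)) | MeasurableSpace.comap X inferInstance]
      = fun ω => g (X ω) := condExp_of_stronglyMeasurable hm hgXsm hg1
  have part1 : (fun ω => g (X ω)) =ᵐ[P]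
      P[(fun ω => Y ω - μ₀ - ∑ s, Z ω s * β s) | MeasurableSpace.comap X inferInstance] := by
    filter_upwards [hAcond, hcondsub] with ω h1 h2
    rw [hcondg] at h2
    simp only [Pi.sub_apply, Pi.zero_apply] at h1 h2
    rw [h1] at h2
    linarith
  -- Part 2
  have hSint : ∫ ω, (∑ s, Z ω s * β s) ∂P = ∑ s, (∫ ω, Z ω s ∂P) * β s := by
    rw [integral_finset_sum Finset.univ (fun s _ => (hZ1 s).mul_const (β s))]
    exact Finset.sum_congr rfl fun s _ => integral_mul_const (β s) _
  have part2 : μ₀ = (∫ ω, Y ω ∂P) - ∑ s, (∫ ω, Z ω s ∂P) * β s := by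
    have e : ∫ ω, A ω ∂P
        = ∫ ω, Y ω ∂P - (μ₀ + (∑ s, (∫ ω, Z ω s ∂P) * β s) + 0) := by
      have i5 : Integrable (fun ω => μ₀ + (∑ s, Z ω s * β s)) P :=
        (integrable_const μ₀).add hS1
      have i4 : Integrable (fun ω => μ₀ + (∑ s, Z ω s * β s) + g (X ω)) P := i5.add hg1
      simp only [hA_def]
      rw [integral_sub hY1 i4, integral_add i5 hg1,
        integral_add (integrable_const μ₀) hS1, integral_const, hgmean, hSint]
      simp
    rw [hintA] at e
    linarith
  -- Part 3
  have hEZ2 : ∀ j, MemLp (P[(fun ω => Z ω j) | MeasurableSpace.comap X inferInstance]) 2 P :=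
    fun j => memℒp_two_condexp hm P (hZ2 j)
  have hEY2 : MemLp (P[Y | MeasurableSpace.comap X inferInstance]) 2 P :=
    memℒp_two_condexp hm P hY2
  have hZc2 : ∀ j, MemLp
      (fun ω => Z ω j - (P[(fun ω => Z ω j) | MeasurableSpace.comap X inferInstance]) ω) 2 P :=
    fun j => (hZ2 j).sub (hEZ2 j)
  have hYc2 : MemLp (fun ω => Y ω - (P[Y | MeasurableSpace.comap X inferInstance]) ω) 2 P :=
    hY2.sub hEY2
  -- orthogonality of A to conditional expectations of Z
  have htE : ∀ j, ∫ ω, A ω * (P[(fun ω => Z ω j) | MeasurableSpace.comap X inferInstance]) ω ∂P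
      = 0 := by
    intro j
    set ψ := P[(fun ω => Z ω j) | MeasurableSpace.comap X inferInstance] with hψ_def
    have hsmψ : StronglyMeasurable[MeasurableSpace.comap X inferInstance] ψ :=
      stronglyMeasurable_condExp
    have hintψA : Integrable (ψ * A) P := int_mul (hEZ2 j) hA2
    have hpull : P[ψ * A | MeasurableSpace.comap X inferInstance] =ᵐ[P]
        ψ * P[A | MeasurableSpace.comap X inferInstance] :=
      condExp_mul_of_stronglyMeasurable_left hsmψ hintψA hA1
    have hzero : P[ψ * A | MeasurableSpace.comap X inferInstance] =ᵐ[P] 0 := by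
      filter_upwards [hpull, hAcond] with ω h1 h2
      simp only [Pi.mul_apply, Pi.zero_apply] at h1 h2 ⊢
      rw [h1, h2, mul_zero]
    have h2 : ∫ ω, (ψ * A) ω ∂P = 0 := by
      rw [← integral_condExp hm, integral_congr_ae hzero]
      simp
    calc ∫ ω, A ω * ψ ω ∂P = ∫ ω, (ψ * A) ω ∂P := by
          apply integral_congr_ae
          filter_upwards with ω
          simp [Pi.mul_apply, mul_comm]
      _ = 0 := h2
  -- orthogonality of A to the centered Z's
  have horthZc : ∀ j, ∫ ω, A ω *
      (Z ω j - (P[(fun ω => Z ω j) | MeasurableSpace.comap X inferInstance]) ω) ∂P = 0 := by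
    intro j
    have e : ∫ ω, A ω *
          (Z ω j - (P[(fun ω => Z ω j) | MeasurableSpace.comap X inferInstance]) ω) ∂P
        = ∫ ω, (A ω * Z ω j
            - A ω * (P[(fun ω => Z ω j) | MeasurableSpace.comap X inferInstance]) ω) ∂P := by
      congr 1; funext ω; ring
    rw [e, integral_sub (int_mul hA2 (hZ2 j)) (int_mul hA2 (hEZ2 j)), horthZ j, htE j]
    ring
  -- conditional expectation of W
  have hEW : P[(fun ω => Y ω - μ₀ - ∑ s, Z ω s * β s) | MeasurableSpace.comap X inferInstance]
      =ᵐ[P] fun ω => (P[Y | MeasurableSpace.comap X inferInstance]) ω - μ₀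
        - ∑ s, (P[(fun ω => Z ω s) | MeasurableSpace.comap X inferInstance]) ω * β s := by
    have i5 : Integrable (fun ω => μ₀ + (∑ s, Z ω s * β s)) P := (integrable_const μ₀).add hS1
    have hW_eq : (fun ω => Y ω - μ₀ - ∑ s, Z ω s * β s)
        = Y - (fun ω => μ₀ + ∑ s, Z ω s * β s) := by
      funext ω; simp only [Pi.sub_apply]; ring
    have h1 : P[(fun ω => Y ω - μ₀ - ∑ s, Z ω s * β s) | MeasurableSpace.comap X inferInstance]
        =ᵐ[P] P[Y | MeasurableSpace.comap X inferInstance]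
          - P[(fun ω => μ₀ + ∑ s, Z ω s * β s) | MeasurableSpace.comap X inferInstance] := by
      rw [hW_eq]; exact condExp_sub hY1 i5 _
    have h2 : P[(fun ω => μ₀ + ∑ s, Z ω s * β s) | MeasurableSpace.comap X inferInstance]
        =ᵐ[P] P[(fun _ : Ω => μ₀) | MeasurableSpace.comap X inferInstance]
          + P[(fun ω => ∑ s, Z ω s * β s) | MeasurableSpace.comap X inferInstance] := by
      rw [show (fun ω => μ₀ + ∑ s, Z ω s * β s)
          = (fun _ : Ω => μ₀) + (fun ω => ∑ s, Z ω s * β s) from rfl]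
      exact condExp_add (integrable_const μ₀) hS1 _
    have h3 : P[(fun _ : Ω => μ₀) | MeasurableSpace.comap X inferInstance] = fun _ => μ₀ :=
      condExp_const hm μ₀
    have h5 : ∀ s : Fin q, P[(fun ω => Z ω s * β s) | MeasurableSpace.comap X inferInstance]
        =ᵐ[P] fun ω => (P[(fun ω => Z ω s) | MeasurableSpace.comap X inferInstance]) ω * β s := by
      intro s
      have e : (fun ω => Z ω s * β s) = (β s) • (fun ω => Z ω s) := by
        funext ω; simp [smul_eq_mul]; ring
      rw [e]
      refine (condExp_smul (β s) (fun ω => Z ω s) _).trans ?_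
      filter_upwards with ω
      simp [Pi.smul_apply, smul_eq_mul, mul_comm]
    have hSsum : P[(fun ω => ∑ s, Z ω s * β s) | MeasurableSpace.comap X inferInstance]
        =ᵐ[P] fun ω => ∑ s,
          (P[(fun ω => Z ω s) | MeasurableSpace.comap X inferInstance]) ω * β s := by
      have e : (fun ω => ∑ s, Z ω s * β s)
          = ∑ s : Fin q, (fun ω => Z ω s * β s) := by
        funext ω; simp [Finset.sum_apply]
      rw [e]
      refine (condExp_finsetSum (fun s _ => (hZ1 s).mul_const (β s)) _).trans ?_
      have h6 : ∀ᵐ ω ∂P, ∀ s : Fin q,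
          (P[(fun ω => Z ω s * β s) | MeasurableSpace.comap X inferInstance]) ω
            = (P[(fun ω => Z ω s) | MeasurableSpace.comap X inferInstance]) ω * β s := by
        rw [ae_all_iff]; intro s; exact h5 s
      filter_upwards [h6] with ω h
      simp only [Finset.sum_apply]
      exact Finset.sum_congr rfl fun s _ => h s
    filter_upwards [h1, h2, hSsum] with ω e1 e2 e4
    simp only [Pi.sub_apply, Pi.add_apply] at e1 e2
    rw [e1, e2, h3, e4]
    ring
  -- A equals centered Y minus centered Z combination, a.e.
  have hAae : A =ᵐ[P] fun ω =>
      (Y ω - (P[Y | MeasurableSpace.comap X inferInstance]) ω)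
      - ∑ s, (Z ω s - (P[(fun ω => Z ω s) | MeasurableSpace.comap X inferInstance]) ω) * β s := by
    filter_upwards [part1, hEW] with ω h1 h2
    have e : ∑ s, (Z ω s - (P[(fun ω => Z ω s) | MeasurableSpace.comap X inferInstance]) ω) * β s
        = (∑ s, Z ω s * β s)
          - ∑ s, (P[(fun ω => Z ω s) | MeasurableSpace.comap X inferInstance]) ω * β s := by
      rw [← Finset.sum_sub_distrib]
      exact Finset.sum_congr rfl fun s _ => by ring
    simp only [hA_def]
    rw [e, h1, h2]
    ring
  -- the normal equations
  have hsumc2 : MemLp (fun ω => ∑ s,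
      (Z ω s - (P[(fun ω => Z ω s) | MeasurableSpace.comap X inferInstance]) ω) * β s) 2 P := by
    have h2 := memLp_finset_sum' (μ := P) (p := 2) Finset.univ
      (f := fun (s : Fin q) (ω : Ω) =>
        (Z ω s - (P[(fun ω => Z ω s) | MeasurableSpace.comap X inferInstance]) ω) * β s)
      (fun s _ => by simpa [mul_comm] using (hZc2 s).const_mul (β s))
    convert h2 using 1
    funext ω
    simp [Finset.sum_apply]
  have hveq : ∀ j, (B *ᵥ β) j =
      ∫ ω, (Z ω j - (P[(fun ω => Z ω j) | MeasurableSpace.comap X inferInstance]) ω)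
        * (Y ω - (P[Y | MeasurableSpace.comap X inferInstance]) ω) ∂P := by
    intro j
    have hstep1 : (B *ᵥ β) j = ∑ s, (∫ ω,
        (Z ω j - (P[(fun ω => Z ω j) | MeasurableSpace.comap X inferInstance]) ω)
        * (Z ω s - (P[(fun ω => Z ω s) | MeasurableSpace.comap X inferInstance]) ω)
        * β s ∂P) := by
      simp only [Matrix.mulVec, dotProduct]
      refine Finset.sum_congr rfl fun s _ => ?_
      rw [hB j s, ← integral_mul_const]
    have hstep2 : (B *ᵥ β) j = ∫ ω,
        (Z ω j - (P[(fun ω => Z ω j) | MeasurableSpace.comap X inferInstance]) ω)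
        * (∑ s, (Z ω s - (P[(fun ω => Z ω s) | MeasurableSpace.comap X inferInstance]) ω) * β s)
        ∂P := by
      rw [hstep1, ← integral_finset_sum Finset.univ
        (fun s _ => (int_mul (hZc2 j) (hZc2 s)).mul_const (β s))]
      congr 1; funext ω
      rw [Finset.mul_sum]
      exact Finset.sum_congr rfl fun s _ => by ring
    have hdiff : (∫ ω, (Z ω j - (P[(fun ω => Z ω j) | MeasurableSpace.comap X inferInstance]) ω)
          * (Y ω - (P[Y | MeasurableSpace.comap X inferInstance]) ω) ∂P) - (B *ᵥ β) j
        = ∫ ω, (Z ω j - (P[(fun ω => Z ω j) | MeasurableSpace.comap X inferInstance]) ω)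
          * ((Y ω - (P[Y | MeasurableSpace.comap X inferInstance]) ω)
            - ∑ s, (Z ω s - (P[(fun ω => Z ω s) | MeasurableSpace.comap X inferInstance]) ω) * β s)
          ∂P := by
      rw [hstep2, ← integral_sub (int_mul (hZc2 j) hYc2) (int_mul (hZc2 j) hsumc2)]
      congr 1; funext ω; ring
    have hzero : ∫ ω, (Z ω j - (P[(fun ω => Z ω j) | MeasurableSpace.comap X inferInstance]) ω)
          * ((Y ω - (P[Y | MeasurableSpace.comap X inferInstance]) ω)
            - ∑ s, (Z ω s - (P[(fun ω => Z ω s) | MeasurableSpace.comap X inferInstance]) ω) * β s)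
          ∂P = 0 := by
      have e : ∫ ω, (Z ω j - (P[(fun ω => Z ω j) | MeasurableSpace.comap X inferInstance]) ω)
          * ((Y ω - (P[Y | MeasurableSpace.comap X inferInstance]) ω)
            - ∑ s, (Z ω s - (P[(fun ω => Z ω s) | MeasurableSpace.comap X inferInstance]) ω) * β s)
          ∂P = ∫ ω, A ω
            * (Z ω j - (P[(fun ω => Z ω j) | MeasurableSpace.comap X inferInstance]) ω) ∂P := by
        apply integral_congr_ae
        filter_upwards [hAae] with ω h
        rw [← h]
        ring
      rw [e, horthZc j]
    rw [hzero] at hdiff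
    linarith
  have part3 : β = B⁻¹ *ᵥ (fun s =>
      ∫ ω, (Z ω s - (P[(fun ω => Z ω s) | MeasurableSpace.comap X inferInstance]) ω)
        * (Y ω - (P[Y | MeasurableSpace.comap X inferInstance]) ω) ∂P) := by
    have hBB : B⁻¹ * B = 1 := Matrix.nonsing_inv_mul B ((Matrix.isUnit_iff_isUnit_det B).mp hBinv)
    have hv : (fun s =>
        ∫ ω, (Z ω s - (P[(fun ω => Z ω s) | MeasurableSpace.comap X inferInstance]) ω)
          * (Y ω - (P[Y | MeasurableSpace.comap X inferInstance]) ω) ∂P) = B *ᵥ β := by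
      funext j; exact (hveq j).symm
    rw [hv, Matrix.mulVec_mulVec, hBB, Matrix.one_mulVec]
  exact ⟨part1, part2, part3⟩
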